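/- Let B₀, D₀, D₂ be positive reals, D₁ ≥ 0 a real, and t > 0. Suppose z ∈ ℂ with Im z ≠ 0 satisfies D₂·t·z² + (D₀ + D₁·t)·z + B₀ = 0. Then |z + B₀/D₀|² = (B₀/D₀)² · (1 − D₀·D₁/(B₀·D₂)). In particular, as t varies over (0, ∞), all nonreal roots of the quadratic lie on a fixed circle in the complex plane with center −B₀/D₀ on the real axis and radius (B₀/D₀)·√(1 − D₀D₁/(B₀D₂)). -/

import Mathlib

/-- **Root locus (Eq. (6)).** Nonreal roots of `D₂ t z² + (D₀ + D₁ t) z + B₀ = 0`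
lie, for every `t > 0`, on the fixed circle of center `−B₀/D₀` and radius
`(B₀/D₀)·√(1 − D₀D₁/(B₀D₂))`. -/
theorem root_locus_circle (B₀ D₀ D₁ D₂ t : ℝ)
    (hB₀ : 0 < B₀) (hD₀ : 0 < D₀) (hD₂ : 0 < D₂) (hD₁ : 0 ≤ D₁) (ht : 0 < t)
    (z : ℂ) (hz : z.im ≠ 0)
    (hroot : (D₂ : ℂ) * t * z ^ 2 + ((D₀ : ℂ) + D₁ * t) * z + B₀ = 0) :
    ‖z + (B₀ / D₀ : ℝ)‖ ^ 2 =
      (B₀ / D₀) ^ 2 * (1 - D₀ * D₁ / (B₀ * D₂)) := by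
  have hre := congrArg Complex.re hroot
  have him := congrArg Complex.im hroot
  set x := z.re with hxdef
  set y := z.im with hydef
  simp [Complex.add_re, Complex.add_im, Complex.mul_re, Complex.mul_im, pow_two] at hre him
  -- from imaginary part: 2 D₂ t x + (D₀ + D₁ t) = 0
  have him' : 2 * D₂ * t * x + (D₀ + D₁ * t) = 0 := by
    have hy' : y * (2 * D₂ * t * x + (D₀ + D₁ * t)) = 0 := by ring_nf; ring_nf at him; linarith
    rcases mul_eq_zero.mp hy' with h | h
    · exact absurd h hz
    · exact h
  -- from real part + imaginary: x² + y² = B₀ / (D₂ t)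
  have hsum : D₂ * t * (x ^ 2 + y ^ 2) = B₀ := by
    linear_combination -hre + x * him' 
  rw [Complex.sq_norm, Complex.normSq_apply]
  simp only [Complex.add_re, Complex.add_im, Complex.ofReal_re, Complex.ofReal_im]
  have hD₂t : D₂ * t ≠ 0 := by positivity
  have ht' : t ≠ 0 := ne_of_gt ht
  have key : D₂ * (x ^ 2 + y ^ 2) * D₀ + 2 * x * B₀ * D₂ + B₀ * D₁ = 0 := by
    have h : t * (D₂ * (x ^ 2 + y ^ 2) * D₀ + 2 * x * B₀ * D₂ + B₀ * D₁) = 0 := by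
      linear_combination D₀ * hsum + B₀ * him'
    rcases mul_eq_zero.mp h with h' | h'
    · exact absurd h' ht'
    · exact h'
  field_simp
  linear_combination (D₀) * key
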